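/- Let X be a second countable locally compact metric space and μ_X a probability measure on X. Suppose for every ε > 0 and every f ∈ C_c(X) there exists q(ε, f) ∈ ℕ such that for all q ≥ q(ε, f), the proportion of measures ν in a finite set Ω_q of probability measures with |ν(f) − μ_X(f)| > ε is at most 2ε. Then there exist subsets Ω_q' ⊆ Ω_q with |Ω_q'|/|Ω_q| → 1 such that every sequence ν_q ∈ Ω_q' converges weak* to μ_X. -/

import Mathlib

open MeasureTheory Filter
open scoped Classical

open scoped Topology

open Set in
theorem exists_dense_cc' {X : Type*} [MetricSpace X]
    [SecondCountableTopology X] [LocallyCompactSpace X] :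
    ∃ g : ℕ → X → ℝ, (∀ n, Continuous (g n) ∧ HasCompactSupport (g n)) ∧
      ∀ f : X → ℝ, Continuous f → HasCompactSupport f → ∀ δ > (0:ℝ),
        ∃ n, ∀ x, |f x - g n x| ≤ δ := by
  set K : CompactExhaustion X := CompactExhaustion.choice X
  have hχ : ∀ m : ℕ, ∃ χ : C(X, ℝ), EqOn χ 1 (K m) ∧ HasCompactSupport χ ∧
      ∀ x, χ x ∈ Icc (0:ℝ) 1 := by
    intro m
    obtain ⟨χ, h1, _, hcs, hbd⟩ := exists_continuous_one_zero_of_isCompact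
      (K.isCompact m) isClosed_empty (disjoint_empty _)
    exact ⟨χ, h1, hcs, hbd⟩
  choose χ hχ1 hχc hχbd using hχ
  set u : ℕ → C(X, ℝ) := TopologicalSpace.denseSeq C(X, ℝ)
  have hu : DenseRange u := TopologicalSpace.denseRange_denseSeq _
  refine ⟨fun p x => u p.unpair.1 x * χ p.unpair.2 x,
    fun p => ⟨(u p.unpair.1).continuous.mul (χ p.unpair.2).continuous,
      ((hχc p.unpair.2).mul_left)⟩, ?_⟩
  intro f hf hfc δ hδ
  obtain ⟨m, hm⟩ := K.exists_superset_of_isCompact hfc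
  set C : Set X := K m ∪ tsupport (χ m) with hCdef
  have hC : IsCompact C := (K.isCompact m).union (hχc m)
  have hmem : UniformSpace.ball (⟨f, hf⟩ : C(X, ℝ))
      {fg : C(X, ℝ) × C(X, ℝ) | ∀ x ∈ C, (fg.1 x, fg.2 x) ∈ {p : ℝ × ℝ | dist p.1 p.2 < δ}} ∈
      𝓝 (⟨f, hf⟩ : C(X, ℝ)) :=
    (nhds_basis_uniformity'
      (ContinuousMap.hasBasis_compactConvergenceUniformity (α := X) (β := ℝ))).mem_of_mem
      (i := (C, {p : ℝ × ℝ | dist p.1 p.2 < δ})) ⟨hC, Metric.dist_mem_uniformity hδ⟩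
  obtain ⟨g0, hg0T, n, rfl⟩ : ∃ g0 ∈ UniformSpace.ball (⟨f, hf⟩ : C(X, ℝ))
      {fg : C(X, ℝ) × C(X, ℝ) | ∀ x ∈ C, (fg.1 x, fg.2 x) ∈ {p : ℝ × ℝ | dist p.1 p.2 < δ}},
      ∃ n, u n = g0 := by
    obtain ⟨g0, hg1, hg2⟩ := mem_closure_iff_nhds.1 (hu (⟨f, hf⟩ : C(X, ℝ))) _ hmem
    exact ⟨g0, hg1, hg2⟩
  simp only [UniformSpace.ball, mem_preimage, mem_setOf_eq, ContinuousMap.coe_mk] at hg0T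
  refine ⟨Nat.pair n m, fun x => ?_⟩
  simp only [Nat.unpair_pair]
  by_cases hx : x ∈ K m
  · have h1 : χ m x = 1 := hχ1 m hx
    have := hg0T x (Or.inl hx)
    rw [Real.dist_eq] at this
    rw [h1, mul_one]
    exact this.le
  · have hf0 : f x = 0 := by
      by_contra h0
      exact hx (hm (subset_tsupport f (by simpa using h0)))
    by_cases hxs : x ∈ tsupport (χ m)
    · have := hg0T x (Or.inr hxs)
      rw [Real.dist_eq] at this
      rw [hf0] at this ⊢
      rw [zero_sub, abs_neg] at this ⊢
      calc |u n x * χ m x| = |u n x| * |χ m x| := abs_mul _ _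
        _ ≤ |u n x| * 1 := by
            refine mul_le_mul_of_nonneg_left ?_ (abs_nonneg _)
            rw [abs_le]
            exact ⟨by linarith [(hχbd m x).1], (hχbd m x).2⟩
        _ = |u n x| := mul_one _
        _ ≤ δ := this.le
    · have : χ m x = 0 := image_eq_zero_of_notMem_tsupport hxs
      rw [hf0, this, mul_zero, sub_zero, abs_zero]
      exact hδ.le

theorem integral_close {X : Type*} [MetricSpace X] [MeasurableSpace X] [BorelSpace X]
    (ν : Measure X) [IsProbabilityMeasure ν] {f g : X → ℝ}
    (hf : Continuous f) (hfc : HasCompactSupport f)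
    (hg : Continuous g) (hgc : HasCompactSupport g)
    {δ : ℝ} (hδ : 0 ≤ δ) (hfg : ∀ x, |f x - g x| ≤ δ) :
    |∫ x, f x ∂ν - ∫ x, g x ∂ν| ≤ δ := by
  have hif : Integrable f ν := hf.integrable_of_hasCompactSupport hfc
  have hig : Integrable g ν := hg.integrable_of_hasCompactSupport hgc
  rw [← integral_sub hif hig]
  calc |∫ x, (f x - g x) ∂ν| ≤ ∫ x, |f x - g x| ∂ν := by
        simpa using norm_integral_le_integral_norm (fun x => f x - g x) (μ := ν)
    _ ≤ ∫ _, δ ∂ν := integral_mono (hif.sub hig).abs (integrable_const δ) hfg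
    _ = δ := by simp

/-- Extraction of a density-one family of almost-equidistributed measures: if for every
`ε > 0` and every compactly supported continuous `f` the proportion of measures
`ν ∈ Ω_q` with `|ν(f) - μ_X(f)| > ε` is eventually at most `2ε`, then there are subsets
`Ω_q' ⊆ Ω_q` with `|Ω_q'|/|Ω_q| → 1` such that every sequence `ν_q ∈ Ω_q'` converges
weak* to `μ_X`. -/
theorem density_one_weak_star_convergence {X : Type*} [MetricSpace X]
    [SecondCountableTopology X] [LocallyCompactSpace X]
    [MeasurableSpace X] [BorelSpace X]
    (μ : Measure X) [IsProbabilityMeasure μ]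
    (Ω : ℕ → Finset (Measure X)) (hne : ∀ q, (Ω q).Nonempty)
    (hprob : ∀ q, ∀ ν ∈ Ω q, IsProbabilityMeasure ν)
    (h : ∀ ε > (0 : ℝ), ∀ f : X → ℝ, Continuous f → HasCompactSupport f →
      ∃ q₀ : ℕ, ∀ q ≥ q₀,
        (((Ω q).filter (fun ν => |∫ x, f x ∂ν - ∫ x, f x ∂μ| > ε)).card : ℝ)
          ≤ 2 * ε * ((Ω q).card : ℝ)) :
    ∃ Ω' : ℕ → Finset (Measure X), (∀ q, Ω' q ⊆ Ω q) ∧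
      Tendsto (fun q => ((Ω' q).card : ℝ) / ((Ω q).card : ℝ)) atTop (nhds 1) ∧
      ∀ ν : ℕ → Measure X, (∀ q, ν q ∈ Ω' q) →
        ∀ f : X → ℝ, Continuous f → HasCompactSupport f →
          Tendsto (fun q => ∫ x, f x ∂(ν q)) atTop (nhds (∫ x, f x ∂μ)) := by
  obtain ⟨g, hg, hgdense⟩ := exists_dense_cc' (X := X)
  -- ε levels
  set e : ℕ → ℝ := fun k => 1 / ((k : ℝ) + 1) ^ 2 with he
  have hepos : ∀ k, 0 < e k := fun k => by positivity
  have hemono : ∀ {k k' : ℕ}, k ≤ k' → e k' ≤ e k := by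
    intro k k' hk
    apply one_div_le_one_div_of_le (by positivity)
    gcongr
  -- thresholds from hypothesis
  have H : ∀ k i : ℕ, ∃ q₀ : ℕ, ∀ q ≥ q₀,
      (((Ω q).filter (fun ν => |∫ x, g i x ∂ν - ∫ x, g i x ∂μ| > e k)).card : ℝ)
        ≤ 2 * e k * ((Ω q).card : ℝ) :=
    fun k i => h (e k) (hepos k) (g i) (hg i).1 (hg i).2
  choose q0 hq0 using H
  set Q : ℕ → ℕ := fun k =>
    k + ((Finset.range (k+1)) ×ˢ (Finset.range (k+1))).sup (fun p => q0 p.1 p.2) with hQ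
  have hQk : ∀ k, k ≤ Q k := fun k => Nat.le_add_right _ _
  have hQq0 : ∀ k i, i ≤ k → q0 k i ≤ Q k := by
    intro k i hi
    refine le_trans ?_ (Nat.le_add_left _ _)
    exact Finset.le_sup (f := fun p : ℕ × ℕ => q0 p.1 p.2) (b := (k, i))
      (Finset.mem_product.2 ⟨Finset.mem_range.2 (Nat.lt_succ_self k),
        Finset.mem_range.2 (Nat.lt_succ_of_le hi)⟩)
  -- the current level
  set Kq : ℕ → ℕ := fun q => Nat.findGreatest (fun k => Q k ≤ q) q with hKq
  have hKq_le : ∀ q, ∀ k, Q k ≤ q → k ≤ Kq q := by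
    intro q k hk
    exact Nat.le_findGreatest (le_trans (hQk k) hk) hk
  have hKq_spec : ∀ q, Kq q ≠ 0 → Q (Kq q) ≤ q := by
    intro q hq
    exact (Nat.findGreatest_eq_iff.1 rfl).2.1 hq
  have hKq_tendsto : Tendsto Kq atTop atTop := by
    rw [tendsto_atTop_atTop]
    exact fun b => ⟨Q b, fun q hq => hKq_le q b hq⟩
  -- define Ω'
  set Ω' : ℕ → Finset (Measure X) := fun q =>
    (Ω q).filter (fun ν => ∀ i < Kq q, |∫ x, g i x ∂ν - ∫ x, g i x ∂μ| ≤ e (Kq q)) with hΩ'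
  have hsub : ∀ q, Ω' q ⊆ Ω q := fun q => Finset.filter_subset _ _
  -- cardinality lower bound
  have hcard : ∀ q, (1 - 2 / ((Kq q : ℝ) + 1)) * ((Ω q).card : ℝ) ≤ ((Ω' q).card : ℝ) := by
    intro q
    set k := Kq q with hk
    have hbad : ((Ω q).filter (fun ν =>
        ¬ ∀ i < k, |∫ x, g i x ∂ν - ∫ x, g i x ∂μ| ≤ e k)).card
        ≤ ∑ i ∈ Finset.range k,
          ((Ω q).filter (fun ν => |∫ x, g i x ∂ν - ∫ x, g i x ∂μ| > e k)).card := by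
      refine le_trans (Finset.card_le_card ?_) (Finset.card_biUnion_le)
      intro ν hν
      rw [Finset.mem_filter] at hν
      push_neg at hν
      obtain ⟨hν1, i, hik, hiv⟩ := hν
      exact Finset.mem_biUnion.2 ⟨i, Finset.mem_range.2 hik,
        Finset.mem_filter.2 ⟨hν1, hiv⟩⟩
    have hbadR : (((Ω q).filter (fun ν =>
        ¬ ∀ i < k, |∫ x, g i x ∂ν - ∫ x, g i x ∂μ| ≤ e k)).card : ℝ)
        ≤ (k : ℝ) * (2 * e k * ((Ω q).card : ℝ)) := by
      calc (((Ω q).filter _).card : ℝ)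
          ≤ ∑ i ∈ Finset.range k,
            (((Ω q).filter (fun ν => |∫ x, g i x ∂ν - ∫ x, g i x ∂μ| > e k)).card : ℝ) := by
            exact_mod_cast hbad
        _ ≤ ∑ _i ∈ Finset.range k, 2 * e k * ((Ω q).card : ℝ) := by
            refine Finset.sum_le_sum fun i hi => ?_
            have hik : i ≤ k := le_of_lt (Finset.mem_range.1 hi)
            have hk0 : k ≠ 0 := by
              intro h0; rw [h0] at hi; simp at hi
            exact hq0 k i q (le_trans (hQq0 k i hik) (hKq_spec q hk0))
        _ = (k : ℝ) * (2 * e k * ((Ω q).card : ℝ)) := by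
            rw [Finset.sum_const, Finset.card_range, nsmul_eq_mul]
    have hsplit : ((Ω' q).card : ℝ) = ((Ω q).card : ℝ)
        - (((Ω q).filter (fun ν =>
          ¬ ∀ i < k, |∫ x, g i x ∂ν - ∫ x, g i x ∂μ| ≤ e k)).card : ℝ) := by
      have := Finset.card_filter_add_card_filter_not
        (s := Ω q) (p := fun ν => ∀ i < k, |∫ x, g i x ∂ν - ∫ x, g i x ∂μ| ≤ e k)
      have : ((Ω' q).card : ℕ) + ((Ω q).filter (fun ν =>
          ¬ ∀ i < k, |∫ x, g i x ∂ν - ∫ x, g i x ∂μ| ≤ e k)).card = (Ω q).card := this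
      push_cast [← this]
      ring
    rw [hsplit]
    have hke : (k : ℝ) * (2 * e k) ≤ 2 / ((k : ℝ) + 1) := by
      have hkp : (0:ℝ) < (k:ℝ) + 1 := by positivity
      have heq : (k:ℝ) * (2 * e k) = 2 * (k:ℝ) / ((k:ℝ)+1)^2 := by rw [he]; ring
      rw [heq, div_le_div_iff₀ (by positivity) hkp]
      nlinarith [(Nat.cast_nonneg k : (0:ℝ) ≤ (k:ℝ))]
    nlinarith [hbadR, hke, (Nat.cast_nonneg (Ω q).card : (0:ℝ) ≤ ((Ω q).card:ℝ)), hepos k, (Nat.cast_nonneg k : (0:ℝ) ≤ (k:ℝ))]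
  -- tendsto of ratio
  have hratio : Tendsto (fun q => ((Ω' q).card : ℝ) / ((Ω q).card : ℝ)) atTop (nhds 1) := by
    have hcpos : ∀ q, (0 : ℝ) < ((Ω q).card : ℝ) := by
      intro q
      exact_mod_cast Finset.card_pos.2 (hne q)
    have hlow : ∀ q, 1 - 2 / ((Kq q : ℝ) + 1) ≤ ((Ω' q).card : ℝ) / ((Ω q).card : ℝ) := by
      intro q
      rw [le_div_iff₀ (hcpos q)]
      exact hcard q
    have hup : ∀ q, ((Ω' q).card : ℝ) / ((Ω q).card : ℝ) ≤ 1 := by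
      intro q
      rw [div_le_one (hcpos q)]
      exact_mod_cast Finset.card_le_card (hsub q)
    have hlim : Tendsto (fun q => 1 - 2 / ((Kq q : ℝ) + 1)) atTop (nhds 1) := by
      have h1 : Tendsto (fun n : ℕ => 1 - 2 / ((n : ℝ) + 1)) atTop (nhds 1) := by
        have := tendsto_one_div_add_atTop_nhds_zero_nat (𝕜 := ℝ)
        have h2 : Tendsto (fun n : ℕ => 2 / ((n : ℝ) + 1)) atTop (nhds 0) := by
          have := this.const_mul (2 : ℝ)
          simpa [div_eq_mul_inv, mul_comm, one_div] using this
        simpa using (tendsto_const_nhds (x := (1:ℝ)) (f := atTop)).sub h2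
      exact h1.comp hKq_tendsto
    exact tendsto_of_tendsto_of_tendsto_of_le_of_le hlim tendsto_const_nhds hlow hup
  refine ⟨Ω', hsub, hratio, ?_⟩
  -- convergence
  intro ν hν f hf hfc
  rw [Metric.tendsto_atTop]
  intro δ hδ
  obtain ⟨i, hi⟩ := hgdense f hf hfc (δ/4) (by linarith)
  obtain ⟨M, hM⟩ := exists_nat_ge (4 / δ)
  set k := max (i + 1) M with hk
  refine ⟨Q k, fun q hq => ?_⟩
  have hKqk : k ≤ Kq q := hKq_le q k hq
  have hik : i < Kq q := lt_of_lt_of_le (lt_of_lt_of_le (Nat.lt_succ_self i) (le_max_left _ _)) hKqk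
  have hνq := hν q
  rw [hΩ', Finset.mem_filter] at hνq
  have hconstraint := hνq.2 i hik
  have heK : e (Kq q) ≤ δ / 4 := by
    have h1 : e (Kq q) ≤ e M := hemono (le_trans (le_max_right _ _) hKqk)
    refine le_trans h1 ?_
    rw [he]
    have hM1 : (4 : ℝ) / δ ≤ (M : ℝ) := hM
    have hMpos : (0 : ℝ) < (M : ℝ) + 1 := by positivity
    rw [div_le_div_iff₀ (by positivity) (by linarith)]
    have : (4 : ℝ) ≤ δ * ((M : ℝ) + 1) := by
      rw [div_le_iff₀ hδ] at hM1
      nlinarith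
    nlinarith [(Nat.cast_nonneg M : (0:ℝ) ≤ (M:ℝ))]
  haveI := hprob q (ν q) (hsub q (hν q))
  have h1 : |∫ x, f x ∂(ν q) - ∫ x, g i x ∂(ν q)| ≤ δ / 4 :=
    integral_close (ν q) hf hfc (hg i).1 (hg i).2 (by linarith) hi
  have h2 : |∫ x, f x ∂μ - ∫ x, g i x ∂μ| ≤ δ / 4 :=
    integral_close μ hf hfc (hg i).1 (hg i).2 (by linarith) hi
  have h3 : |∫ x, g i x ∂(ν q) - ∫ x, g i x ∂μ| ≤ δ / 4 := le_trans hconstraint heK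
  rw [Real.dist_eq]
  have := abs_sub_abs_le_abs_sub (∫ x, f x ∂(ν q)) (∫ x, f x ∂μ)
  calc |∫ x, f x ∂(ν q) - ∫ x, f x ∂μ|
      ≤ |∫ x, f x ∂(ν q) - ∫ x, g i x ∂(ν q)| + |∫ x, g i x ∂(ν q) - ∫ x, f x ∂μ| := by
        exact abs_sub_le _ _ _
    _ ≤ δ/4 + (|∫ x, g i x ∂(ν q) - ∫ x, g i x ∂μ| + |∫ x, g i x ∂μ - ∫ x, f x ∂μ|) := by
        gcongr
        exact abs_sub_le _ _ _
    _ ≤ δ/4 + (δ/4 + δ/4) := by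
        rw [abs_sub_comm (∫ x, g i x ∂μ)]
        gcongr
    _ < δ := by linarith
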